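/- A pathwise embedding f : A → B between synchronization trees of height at most k is a p-morphism if and only if every commutative square P → A, P → Q, Q → B (with P → Q an embedding of paths, and vertical maps into A and B being embeddings making the square commute with f) admits a diagonal filler Q → A in the category of synchronization trees and pathwise embeddings. -/

import Mathlib

/-- A (pointed) Kripke model over a set `V` of propositional variables. -/
structure Kripke (V : Type) where
  World : Type
  R : World → World → Prop
  val : V → World → Prop
  pt : World

/-- A homomorphism of Kripke models. -/
structure KHom {V : Type} (A B : Kripke V) where
  toFun : A.World → B.World
  map_rel : ∀ x y, A.R x y → B.R (toFun x) (toFun y)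
  map_val : ∀ p x, A.val p x → B.val p (toFun x)
  map_pt : toFun A.pt = B.pt

namespace KHom

variable {V : Type} {A B C : Kripke V}

/-- Composition of homomorphisms of Kripke models. -/
def comp (g : KHom B C) (f : KHom A B) : KHom A C where
  toFun := g.toFun ∘ f.toFun
  map_rel := fun x y h => g.map_rel _ _ (f.map_rel _ _ h)
  map_val := fun p x h => g.map_val _ _ (f.map_val _ _ h)
  map_pt := by simp [f.map_pt, g.map_pt]

/-- A pathwise embedding: a homomorphism reflecting the unary predicates. -/
def Pathwise (f : KHom A B) : Prop :=
  ∀ p x, B.val p (f.toFun x) → A.val p x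

/-- An embedding: an injective homomorphism reflecting the unary predicates
and the accessibility relation. -/
def IsEmbedding (f : KHom A B) : Prop :=
  Function.Injective f.toFun ∧ f.Pathwise ∧
    ∀ x y, B.R (f.toFun x) (f.toFun y) → A.R x y

/-- A p-morphism: a pathwise embedding satisfying the back condition. -/
def IsPMorphism (f : KHom A B) : Prop :=
  f.Pathwise ∧ ∀ x y, B.R (f.toFun x) y → ∃ x', A.R x x' ∧ f.toFun x' = y

end KHom

/-- `IsPath A l x` : `l` is a finite R-path from the distinguished element of `A` to `x`. -/
def IsPath {V : Type} (A : Kripke V) (l : List A.World) (x : A.World) : Prop :=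
  l.head? = some A.pt ∧ l.getLast? = some x ∧ l.Chain' A.R

/-- A synchronization tree: every element is reachable from the distinguished
element by a unique finite path along the accessibility relation. -/
def IsSyncTree {V : Type} (A : Kripke V) : Prop :=
  ∀ x, ∃! l, IsPath A l x

/-- Height at most `k`: every path from the root makes at most `k` steps
(i.e. has at most `k+1` elements). -/
def HeightLE {V : Type} (A : Kripke V) (k : ℕ∞) : Prop :=
  ∀ l x, IsPath A l x → (l.length : ℕ∞) ≤ k + 1

/-- A path model: the elements form a finite R-chain starting at the
distinguished element, with no other R-edges. -/
def IsPathModel {V : Type} (A : Kripke V) : Prop :=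
  ∃ l : List A.World, l ≠ [] ∧ l.Nodup ∧ l.head? = some A.pt ∧ (∀ x, x ∈ l) ∧
    ∀ x y, A.R x y ↔ ∃ i, l[i]? = some x ∧ l[i + 1]? = some y

/-- Modal formulas. -/
inductive MF (V : Type) where
  | top | bot
  | var (p : V)
  | neg (φ : MF V)
  | and (φ ψ : MF V)
  | or (φ ψ : MF V)
  | box (φ : MF V)
  | dia (φ : MF V)

/-- Kripke semantics of modal formulas. -/
def Sat {V : Type} (A : Kripke V) (w : A.World) : MF V → Prop
  | .top => True
  | .bot => False
  | .var p => A.val p w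
  | .neg φ => ¬ Sat A w φ
  | .and φ ψ => Sat A w φ ∧ Sat A w ψ
  | .or φ ψ => Sat A w φ ∨ Sat A w ψ
  | .box φ => ∀ x, A.R w x → Sat A x φ
  | .dia φ => ∃ x, A.R w x ∧ Sat A x φ

/-- Modal depth: the maximal nesting of modalities. -/
def MF.depth {V : Type} : MF V → ℕ
  | .top => 0
  | .bot => 0
  | .var _ => 0
  | .neg φ => φ.depth
  | .and φ ψ => max φ.depth ψ.depth
  | .or φ ψ => max φ.depth ψ.depth
  | .box φ => φ.depth + 1
  | .dia φ => φ.depth + 1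

/-- Existential modal formulas: no `□`, negations only on propositional variables. -/
inductive MF.IsExistential {V : Type} : MF V → Prop
  | top : MF.IsExistential .top
  | bot : MF.IsExistential .bot
  | var (p : V) : MF.IsExistential (.var p)
  | negvar (p : V) : MF.IsExistential (.neg (.var p))
  | and {φ ψ} : MF.IsExistential φ → MF.IsExistential ψ → MF.IsExistential (.and φ ψ)
  | or {φ ψ} : MF.IsExistential φ → MF.IsExistential ψ → MF.IsExistential (.or φ ψ)
  | dia {φ} : MF.IsExistential φ → MF.IsExistential (.dia φ)

/-- The tree unravelling of a Kripke model to depth `k`. -/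
def Unravel {V : Type} (A : Kripke V) (k : ℕ∞) : Kripke V where
  World := { l : List A.World // l ≠ [] ∧ l.head? = some A.pt ∧ l.Chain' A.R ∧
    (l.length : ℕ∞) ≤ k + 1 }
  R s t := ∃ x, t.val = s.val ++ [x]
  val p s := ∃ x, s.val.getLast? = some x ∧ A.val p x
  pt := ⟨[A.pt], by simp, by simp, by first | exact List.isChain_singleton _ | exact List.chain'_singleton _ | simp [List.Chain'], by simp⟩

/-- The projection from the unravelling, sending a sequence to its last element. -/
def projFun {V : Type} (A : Kripke V) (k : ℕ∞) : (Unravel A k).World → A.World :=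
  fun s => s.val.getLast s.prop.1

section Aux
variable {V : Type} {A B : Kripke V}

theorem KHom.ext' {f g : KHom A B} (h : f.toFun = g.toFun) : f = g := by
  cases f; cases g; simpa using h

theorem chain'_getElem {α : Type*} {R : α → α → Prop} {l : List α} (h : l.Chain' R)
    {i : ℕ} (hi : i + 1 < l.length) : R l[i] l[i+1] := by
  have := List.isChain_iff_getElem.mp h i (by omega)
  simpa using this

theorem path_ne_nil {l : List A.World} {x : A.World} (h : IsPath A l x) : l ≠ [] := by
  intro hl; subst hl; simp [IsPath] at h

theorem path_length_pos {l : List A.World} {x : A.World} (h : IsPath A l x) :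
    0 < l.length := List.length_pos_iff.mpr (path_ne_nil h)

theorem path_getElem_zero {l : List A.World} {x : A.World} (h : IsPath A l x)
    (h0 : 0 < l.length) : l[0] = A.pt := by
  have := h.1
  rw [List.head?_eq_getElem?, List.getElem?_eq_getElem h0] at this
  exact Option.some_injective _ this

theorem path_getLast {l : List A.World} {x : A.World} (h : IsPath A l x) :
    l[l.length - 1]'(by have := path_length_pos h; omega) = x := by
  have := h.2.1
  rw [List.getLast?_eq_getElem?, List.getElem?_eq_getElem (by have := path_length_pos h; omega)] at this
  exact Option.some_injective _ this

theorem path_take {l : List A.World} {x : A.World} (h : IsPath A l x)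
    {i : ℕ} (hi : i < l.length) : IsPath A (l.take (i+1)) l[i] := by
  have hlen : (l.take (i+1)).length = i + 1 := by
    rw [List.length_take]; omega
  refine ⟨?_, ?_, h.2.2.prefix (List.take_prefix _ _)⟩
  · rw [List.head?_eq_getElem?, List.getElem?_take]
    simp only [if_pos (by omega : (0:ℕ) < i+1)]
    rw [← List.head?_eq_getElem?]; exact h.1
  · rw [List.getLast?_eq_getElem?, hlen]
    simp only [Nat.add_sub_cancel]
    rw [List.getElem?_take, if_pos (by omega)]
    exact List.getElem?_eq_getElem hi

theorem sync_path_nodup (hA : IsSyncTree A) {l : List A.World} {x : A.World}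
    (h : IsPath A l x) : l.Nodup := by
  rw [List.nodup_iff_injective_getElem]
  rintro ⟨i, hi⟩ ⟨j, hj⟩ hij
  simp only [Fin.val_mk] at hij
  have h1 := path_take h hi
  have h2 := path_take h hj
  rw [hij] at h1
  have := (hA l[j]).unique h1 h2
  have := congrArg List.length this
  simp only [List.length_take, Fin.val_mk] at this
  exact Fin.ext (by simp only [Fin.val_mk]; omega)

theorem sync_path_consec (hA : IsSyncTree A) {l : List A.World} {x : A.World}
    (h : IsPath A l x) {i j : ℕ} (hi : i < l.length) (hj : j < l.length)
    (hR : A.R l[i] l[j]) : j = i + 1 := by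
  have h1 : IsPath A (l.take (i+1) ++ [l[j]]) l[j] := by
    have ht := path_take h hi
    refine ⟨?_, List.getLast?_concat, ?_⟩
    · rw [List.head?_append_of_ne_nil _ (path_ne_nil ht)]  -- may need fixing
      exact ht.1
    · rw [List.Chain', List.isChain_append]
      refine ⟨ht.2.2, List.isChain_singleton _, ?_⟩
      intro a ha b hb
      simp only [List.head?_cons, Option.mem_def, Option.some.injEq] at hb
      rw [ht.2.1] at ha
      simp only [Option.mem_def, Option.some.injEq] at ha
      subst ha; subst hb; exact hR
  have h2 := path_take h hj
  have := (hA l[j]).unique h1 h2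
  have := congrArg List.length this
  simp only [List.length_append, List.length_take, List.length_singleton] at this
  omega

theorem path_map (f : KHom A B) {l : List A.World} {x : A.World} (h : IsPath A l x) :
    IsPath B (l.map f.toFun) (f.toFun x) := by
  refine ⟨?_, ?_, ?_⟩
  · rw [List.head?_map, h.1]; simp [f.map_pt]
  · rw [List.getLast?_map, h.2.1]; simp
  · rw [List.Chain', List.isChain_map]
    exact h.2.2.imp (fun a b => f.map_rel a b)

end Aux

section CM
variable {V : Type}

abbrev ChainModel (V : Type) (n : ℕ) (hn : 0 < n) (vp : V → Fin n → Prop) : Kripke V where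
  World := Fin n
  R i j := (j : ℕ) = (i : ℕ) + 1
  val := vp
  pt := ⟨0, hn⟩

theorem finRange_getElem? {n i : ℕ} {x : Fin n} :
    (List.finRange n)[i]? = some x ↔ (x : ℕ) = i := by
  rw [List.getElem?_eq_some_iff]
  constructor
  · rintro ⟨h, rfl⟩; simp [List.getElem_finRange]
  · rintro h
    have hi : i < (List.finRange n).length := by
      rw [List.length_finRange]; omega
    exact ⟨hi, by simp [List.getElem_finRange, Fin.ext_iff, h]⟩

theorem chainModel_isPathModel {n : ℕ} {hn : 0 < n} {vp : V → Fin n → Prop} :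
    IsPathModel (ChainModel V n hn vp) := by
  refine ⟨List.finRange n, by simp only [ne_eq, ← List.length_eq_zero_iff, List.length_finRange]; omega, List.nodup_finRange n,
    ?_, fun x => List.mem_finRange x, ?_⟩
  · rw [List.head?_eq_getElem?, List.getElem?_eq_getElem (by simp only [List.length_finRange]; omega)]
    simp [List.getElem_finRange]
  · intro x y
    show (y : ℕ) = (x : ℕ) + 1 ↔ _
    constructor
    · intro h
      exact ⟨(x : ℕ), finRange_getElem?.mpr rfl, finRange_getElem?.mpr h⟩
    · rintro ⟨i, h1, h2⟩
      rw [finRange_getElem?.mp h2, finRange_getElem?.mp h1]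

theorem chainModel_height {n : ℕ} {hn : 0 < n} {vp : V → Fin n → Prop} {k : ℕ∞}
    (hk : (n : ℕ∞) ≤ k + 1) : HeightLE (ChainModel V n hn vp) k := by
  rintro l x ⟨h1, h2, h3⟩
  have hlp : 0 < l.length := by
    rcases l with _ | _ <;> simp_all
  have key : ∀ j (hj : j < l.length), ((l[j] : Fin n) : ℕ) = j := by
    intro j
    induction j with
    | zero =>
      intro h0
      have : l[0] = (⟨0, hn⟩ : Fin n) := by
        rw [List.head?_eq_getElem?, List.getElem?_eq_getElem h0] at h1
        exact Option.some_injective _ h1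
      rw [this]
    | succ j ih =>
      intro hj
      have hR := chain'_getElem h3 (i := j) hj
      have : ((l[j+1] : Fin n) : ℕ) = ((l[j]'(by omega) : Fin n) : ℕ) + 1 := hR
      rw [this, ih (by omega)]
  have hlast : l.length - 1 < n := by
    have := (l[l.length - 1]'(by omega)).isLt
    rwa [key (l.length - 1) (by omega)] at this
  have hle : l.length ≤ n := by omega
  calc (l.length : ℕ∞) ≤ (n : ℕ∞) := by exact_mod_cast hle
    _ ≤ k + 1 := hk

end CM

section Fwd
variable {V : Type}

theorem pm_succ {Q : Kripke V} {lQ : List Q.World} (hnd : lQ.Nodup)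
    (hR : ∀ x y, Q.R x y ↔ ∃ i, lQ[i]? = some x ∧ lQ[i+1]? = some y)
    {j : ℕ} (hj : j < lQ.length) {y : Q.World} (h : Q.R (lQ[j]) y) :
    ∃ _ : j + 1 < lQ.length, y = lQ[j+1] := by
  obtain ⟨i, h1, h2⟩ := (hR _ _).mp h
  obtain ⟨hi, hieq⟩ := List.getElem?_eq_some_iff.mp h1
  have hij : i = j := (hnd.getElem_inj_iff).mp hieq
  subst hij
  obtain ⟨hi1, h2'⟩ := List.getElem?_eq_some_iff.mp h2
  exact ⟨hi1, h2'.symm⟩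

theorem pm_R {Q : Kripke V} {lQ : List Q.World}
    (hR : ∀ x y, Q.R x y ↔ ∃ i, lQ[i]? = some x ∧ lQ[i+1]? = some y)
    {j : ℕ} (hj : j + 1 < lQ.length) : Q.R (lQ[j]) (lQ[j+1]) :=
  (hR _ _).mpr ⟨j, List.getElem?_eq_getElem (by omega), List.getElem?_eq_getElem hj⟩

noncomputable def diagSeq {P Q A B : Kripke V} (f : KHom A B) (α : KHom P A)
    (β : KHom Q B) (lP : List P.World) (lQ : List Q.World) : ℕ → A.World
  | 0 => A.pt
  | j+1 =>
    if h : j + 1 < lP.length then α.toFun (lP[j+1]'h)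
    else @Classical.epsilon _ ⟨A.pt⟩ (fun a => A.R (diagSeq f α β lP lQ j) a ∧
      f.toFun a = β.toFun (lQ.getD (j+1) Q.pt))

theorem stmt15_forward {A B P Q : Kripke V} (f : KHom A B)
    (hpm : f.IsPMorphism) (hP : IsPathModel P) (hQ : IsPathModel Q)
    (i : KHom P Q) (α : KHom P A) (β : KHom Q B)
    (hβ : β.IsEmbedding) (hsq : f.comp α = β.comp i) :
    ∃ d : KHom Q A, d.Pathwise ∧ d.comp i = α ∧ f.comp d = β := by
  obtain ⟨lP, hPne, hPnd, hPhd, hPmem, hPR⟩ := hP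
  obtain ⟨lQ, hQne, hQnd, hQhd, hQmem, hQR⟩ := hQ
  have hPpos : 0 < lP.length := List.length_pos_iff.mpr hPne
  have hQpos : 0 < lQ.length := List.length_pos_iff.mpr hQne
  have hP0 : lP[0] = P.pt := by
    rw [List.head?_eq_getElem?, List.getElem?_eq_getElem hPpos] at hPhd
    exact Option.some_injective _ hPhd
  have hQ0 : lQ[0] = Q.pt := by
    rw [List.head?_eq_getElem?, List.getElem?_eq_getElem hQpos] at hQhd
    exact Option.some_injective _ hQhd
  have hsq' : ∀ w, f.toFun (α.toFun w) = β.toFun (i.toFun w) :=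
    fun w => congrFun (congrArg KHom.toFun hsq) w
  -- Claim2 : i maps lP onto an initial segment of lQ
  have claim2 : ∀ j (hj : j < lP.length), ∃ hj' : j < lQ.length,
      i.toFun (lP[j]) = lQ[j]'hj' := by
    intro j
    induction j with
    | zero =>
      intro _
      exact ⟨hQpos, by rw [hP0, i.map_pt, hQ0]⟩
    | succ j ih =>
      intro hj
      obtain ⟨hj', heq⟩ := ih (by omega)
      have hrel : Q.R (lQ[j]'hj') (i.toFun (lP[j+1])) := by
        rw [← heq]
        exact i.map_rel _ _ (pm_R hPR hj)
      obtain ⟨h1, h2⟩ := pm_succ hQnd hQR hj' hrel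
      exact ⟨h1, h2⟩
  set g : ℕ → A.World := diagSeq f α β lP lQ with hg
  have claim1 : ∀ j (hj : j < lP.length), g j = α.toFun (lP[j]) := by
    intro j hj
    cases j with
    | zero => rw [hP0, α.map_pt]; rfl
    | succ j => simp only [hg, diagSeq, dif_pos hj]
  -- Claim3 : f ∘ g = β on indices
  have claim3 : ∀ j (hj : j < lQ.length), f.toFun (g j) = β.toFun (lQ[j]'hj) := by
    intro j
    induction j with
    | zero =>
      intro _
      have : g 0 = A.pt := rfl
      rw [this, f.map_pt, hQ0, β.map_pt]
    | succ j ih =>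
      intro hj
      by_cases hp : j + 1 < lP.length
      · rw [claim1 _ hp, hsq' _, (claim2 _ hp).choose_spec]
      · have hB : B.R (f.toFun (g j)) (β.toFun (lQ[j+1])) := by
          rw [ih (by omega)]
          exact β.map_rel _ _ (pm_R hQR hj)
        obtain ⟨a, ha1, ha2⟩ := hpm.2 _ _ hB
        have hgd : lQ.getD (j+1) Q.pt = lQ[j+1] := List.getD_eq_getElem _ _ hj
        have hex : ∃ a, A.R (g j) a ∧ f.toFun a = β.toFun (lQ.getD (j+1) Q.pt) := by
          rw [hgd]; exact ⟨a, ha1, ha2⟩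
        have hspec := Classical.epsilon_spec hex
        have hgj : g (j+1) = @Classical.epsilon _ ⟨A.pt⟩
            (fun a => A.R (g j) a ∧ f.toFun a = β.toFun (lQ.getD (j+1) Q.pt)) := by
          simp only [hg, diagSeq, dif_neg hp]
        rw [hgj, hspec.2, hgd]
  -- Claim4 : g is a chain
  have claim4 : ∀ j, j + 1 < lQ.length → A.R (g j) (g (j+1)) := by
    intro j hj
    by_cases hp : j + 1 < lP.length
    · rw [claim1 _ hp, claim1 _ (by omega : j < lP.length)]
      exact α.map_rel _ _ (pm_R hPR hp)
    · have hB : B.R (f.toFun (g j)) (β.toFun (lQ[j+1])) := by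
        rw [claim3 _ (by omega)]
        exact β.map_rel _ _ (pm_R hQR hj)
      obtain ⟨a, ha1, ha2⟩ := hpm.2 _ _ hB
      have hgd : lQ.getD (j+1) Q.pt = lQ[j+1] := List.getD_eq_getElem _ _ hj
      have hex : ∃ a, A.R (g j) a ∧ f.toFun a = β.toFun (lQ.getD (j+1) Q.pt) := by
        rw [hgd]; exact ⟨a, ha1, ha2⟩
      have hspec := Classical.epsilon_spec hex
      have hgj : g (j+1) = @Classical.epsilon _ ⟨A.pt⟩
          (fun a => A.R (g j) a ∧ f.toFun a = β.toFun (lQ.getD (j+1) Q.pt)) := by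
        simp only [hg, diagSeq, dif_neg hp]
      rw [hgj]; exact hspec.1
  -- index function
  have hmem' : ∀ x : Q.World, ∃ n, ∃ _ : n < lQ.length, lQ[n] = x :=
    fun x => List.mem_iff_getElem.mp (hQmem x)
  choose idx hlt heq using hmem'
  have idx_unique : ∀ j (hj : j < lQ.length), idx (lQ[j]'hj) = j := by
    intro j hj
    exact (hQnd.getElem_inj_iff).mp (heq (lQ[j]'hj))
  have fd : ∀ x, f.toFun (g (idx x)) = β.toFun x := by
    intro x
    rw [claim3 _ (hlt x)]
    exact congrArg _ (heq x)
  refine ⟨⟨fun x => g (idx x), ?_, ?_, ?_⟩, ?_, ?_, ?_⟩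
  · -- map_rel
    intro x y h
    obtain ⟨jj, h1, h2⟩ := (hQR _ _).mp h
    obtain ⟨hj1, he1⟩ := List.getElem?_eq_some_iff.mp h1
    obtain ⟨hj2, he2⟩ := List.getElem?_eq_some_iff.mp h2
    have e1 : idx x = jj := by
      have := idx_unique jj hj1; rw [he1] at this; exact this
    have e2 : idx y = jj + 1 := by
      have := idx_unique (jj+1) hj2; rw [he2] at this; exact this
    show A.R (g (idx x)) (g (idx y))
    rw [e1, e2]
    exact claim4 _ hj2
  · -- map_val
    intro p x h
    show A.val p (g (idx x))
    exact hpm.1 p _ (by rw [fd x]; exact β.map_val p x h)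
  · -- map_pt
    show g (idx Q.pt) = A.pt
    have h0 : idx Q.pt = 0 := by
      have := idx_unique 0 hQpos; rw [hQ0] at this; exact this
    rw [h0]; rfl
  · -- Pathwise
    intro p x h
    refine hβ.2.1 p x ?_
    rw [← fd x]
    exact f.map_val _ _ h
  · -- d.comp i = α
    apply KHom.ext'
    funext w
    obtain ⟨j, hj, hw⟩ := List.mem_iff_getElem.mp (hPmem w)
    obtain ⟨hj', he⟩ := claim2 j hj
    show g (idx (i.toFun w)) = α.toFun w
    rw [← hw, he, idx_unique _ hj', claim1 _ hj]
  · -- f.comp d = β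
    apply KHom.ext'
    funext x
    exact fd x

end Fwd

section Bwd
variable {V : Type}

theorem stmt15_backward (k : ℕ∞) (A B : Kripke V)
    (hA : IsSyncTree A) (hAk : HeightLE A k) (hB : IsSyncTree B) (hBk : HeightLE B k)
    (f : KHom A B) (hf : f.Pathwise)
    (H : ∀ (P Q : Kripke V), IsPathModel P → HeightLE P k → IsPathModel Q → HeightLE Q k →
        ∀ (i : KHom P Q) (α : KHom P A) (β : KHom Q B),
          i.IsEmbedding → α.IsEmbedding → β.IsEmbedding →
          f.comp α = β.comp i →
          ∃ d : KHom Q A, d.Pathwise ∧ d.comp i = α ∧ f.comp d = β) :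
    f.IsPMorphism := by
  refine ⟨hf, ?_⟩
  intro x y hxy
  obtain ⟨l, hl, -⟩ := hA x
  have hnpos : 0 < l.length := path_length_pos hl
  have hlnd : l.Nodup := sync_path_nodup hA hl
  set m : List B.World := l.map f.toFun ++ [y] with hm
  have hmlen : m.length = l.length + 1 := by simp [hm]
  have hmpath : IsPath B m y := by
    have h1 := path_map f hl
    have hxl : f.toFun x = (l.map f.toFun).getLast (path_ne_nil h1) := by
      rw [List.getLast_eq_getElem]
      have := h1.2.1
      rw [List.getLast?_eq_getElem?,
        List.getElem?_eq_getElem (by simp [List.length_map]; omega)] at this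
      exact (Option.some_injective _ this).symm
    refine ⟨?_, List.getLast?_concat, ?_⟩
    · rw [hm, List.head?_append_of_ne_nil _ (path_ne_nil h1)]; exact h1.1
    · rw [hm, List.Chain', List.isChain_append]
      refine ⟨h1.2.2, List.isChain_singleton _, ?_⟩
      intro a ha b hb
      rw [h1.2.1] at ha
      simp only [Option.mem_def, Option.some.injEq, List.head?_cons] at ha hb
      subst ha; subst hb; exact hxy
  have hmnd : m.Nodup := sync_path_nodup hB hmpath
  have hmpos : 0 < m.length := by omega
  -- the two chain models
  set P : Kripke V := ChainModel V l.length hnpos (fun p j => A.val p (l[(j : ℕ)]'j.isLt))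
    with hPdef
  set Q : Kripke V := ChainModel V m.length hmpos (fun p j => B.val p (m[(j : ℕ)]'j.isLt))
    with hQdef
  have hgm : ∀ (j : ℕ) (hj : j < l.length), m[j]'(by omega) = f.toFun (l[j]'hj) := by
    intro j hj
    simp only [hm]
    rw [List.getElem_append_left (by simp [List.length_map]; omega)]
    simp [List.getElem_map]
  have hmy : m[l.length]'(by omega) = y := by
    have : m[l.length]? = some y := by
      simp only [hm]
      have he : l.length = (l.map f.toFun).length := by simp
      rw [he, List.getElem?_concat_length]
    rw [List.getElem?_eq_getElem (by omega)] at this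
    exact Option.some_injective _ this
  -- the morphisms
  refine ?_
  let ii : KHom P Q :=
    { toFun := fun j => (⟨(j : ℕ), by omega⟩ : Fin m.length)
      map_rel := fun a b h => h
      map_val := fun p j h => by
        show B.val p (m[(j : ℕ)]'(by omega))
        rw [hgm (j : ℕ) j.isLt]
        exact f.map_val _ _ h
      map_pt := rfl }
  let α : KHom P A :=
    { toFun := fun j => l[(j : ℕ)]'j.isLt
      map_rel := fun a b h => by
        have hb : (b : ℕ) = (a : ℕ) + 1 := h
        have h2 := chain'_getElem hl.2.2 (i := (a : ℕ)) (by omega)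
        show A.R (l[(a : ℕ)]'a.isLt) (l[(b : ℕ)]'b.isLt)
        convert h2 using 2
      map_val := fun p j h => h
      map_pt := path_getElem_zero hl hnpos }
  let β : KHom Q B :=
    { toFun := fun j => m[(j : ℕ)]'j.isLt
      map_rel := fun a b h => by
        have hb : (b : ℕ) = (a : ℕ) + 1 := h
        have h2 := chain'_getElem hmpath.2.2 (i := (a : ℕ)) (by omega)
        show B.R (m[(a : ℕ)]'a.isLt) (m[(b : ℕ)]'b.isLt)
        convert h2 using 2
      map_val := fun p j h => h
      map_pt := path_getElem_zero hmpath hmpos }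
  have hii : ii.IsEmbedding := by
    refine ⟨fun a b h => ?_, fun p j h => ?_, fun a b h => h⟩
    · have h' := congrArg Fin.val h
      exact Fin.ext h'
    · show A.val p (l[(j : ℕ)]'j.isLt)
      have : B.val p (m[(j : ℕ)]'(by omega)) := h
      rw [hgm (j : ℕ) j.isLt] at this
      exact hf p _ this
  have hα : α.IsEmbedding := by
    refine ⟨fun a b h => ?_, fun p j h => h, fun a b h => ?_⟩
    · have h' : l[(a : ℕ)]'a.isLt = l[(b : ℕ)]'b.isLt := h
      exact Fin.ext ((hlnd.getElem_inj_iff).mp h')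
    · have h' : A.R (l[(a : ℕ)]'a.isLt) (l[(b : ℕ)]'b.isLt) := h
      exact sync_path_consec hA hl a.isLt b.isLt h'
  have hβ : β.IsEmbedding := by
    refine ⟨fun a b h => ?_, fun p j h => h, fun a b h => ?_⟩
    · have h' : m[(a : ℕ)]'a.isLt = m[(b : ℕ)]'b.isLt := h
      exact Fin.ext ((hmnd.getElem_inj_iff).mp h')
    · have h' : B.R (m[(a : ℕ)]'a.isLt) (m[(b : ℕ)]'b.isLt) := h
      exact sync_path_consec hB hmpath a.isLt b.isLt h'
  have hsq : f.comp α = β.comp ii := by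
    apply KHom.ext'
    funext j
    show f.toFun (l[(j : ℕ)]'j.isLt) = m[(j : ℕ)]'(by omega)
    exact (hgm (j : ℕ) j.isLt).symm
  obtain ⟨d, hdpw, hdi, hdf⟩ := H P Q chainModel_isPathModel
    (chainModel_height (hAk l x hl)) chainModel_isPathModel
    (chainModel_height (hBk m y hmpath)) ii α β hii hα hβ hsq
  have hdi' : ∀ j : Fin l.length, d.toFun (ii.toFun j) = α.toFun j :=
    fun j => congrFun (congrArg KHom.toFun hdi) j
  have hdf' : ∀ j : Fin m.length, f.toFun (d.toFun j) = β.toFun j :=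
    fun j => congrFun (congrArg KHom.toFun hdf) j
  refine ⟨d.toFun ⟨l.length, by omega⟩, ?_, ?_⟩
  · have h1 : d.toFun ⟨l.length - 1, by omega⟩ = x := by
      have := hdi' ⟨l.length - 1, by omega⟩
      rw [this]
      show l[l.length - 1]'_ = x
      exact path_getLast hl
    have hrel : Q.R (⟨l.length - 1, by omega⟩ : Fin m.length) ⟨l.length, by omega⟩ := by
      show l.length = (l.length - 1) + 1
      omega
    have := d.map_rel _ _ hrel
    rwa [h1] at this
  · rw [hdf' ⟨l.length, by omega⟩]
    exact hmy

end Bwd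

/-- A pathwise embedding between synchronization trees of height at
most `k` is a p-morphism iff every commutative square over an embedding of paths
admits a diagonal filler. -/
theorem stmt15 {V : Type} (k : ℕ∞) (A B : Kripke V)
    (hA : IsSyncTree A) (hAk : HeightLE A k) (hB : IsSyncTree B) (hBk : HeightLE B k)
    (f : KHom A B) (hf : f.Pathwise) :
    f.IsPMorphism ↔
      ∀ (P Q : Kripke V), IsPathModel P → HeightLE P k → IsPathModel Q → HeightLE Q k →
        ∀ (i : KHom P Q) (α : KHom P A) (β : KHom Q B),
          i.IsEmbedding → α.IsEmbedding → β.IsEmbedding →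
          f.comp α = β.comp i →
          ∃ d : KHom Q A, d.Pathwise ∧ d.comp i = α ∧ f.comp d = β := by
  constructor
  · intro hpm P Q hP hPk hQ hQk i α β hi hα hβ hsq
    exact stmt15_forward f hpm hP hQ i α β hβ hsq
  · intro H
    exact stmt15_backward k A B hA hAk hB hBk f hf H
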